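/- arXiv:1907.04164 — 6 statements merged into one kernel-verified Lean document; each statement's English description precedes it below -/
import Mathlib

section
/- For momentum SGD on a scalar noisy quadratic, the expected risk at time t satisfies E[ℓ(θ(t))] ≤ ((r₁^{t+1} - r₂^{t+1} - β(r₁^t - r₂^t))/(r₁ - r₂))² E[ℓ(θ(0))] + (1+β)αc / (2B(2β + 2 - αh)(1-β)), where r₁ ≥ r₂ are the roots of x² - (1-αh+β)x + β = 0. -/
open MeasureTheory ProbabilityTheory

open MeasureTheory ProbabilityTheory Finset

lemma integrable_mul_of_memL2 {Ω : Type*} [MeasurableSpace Ω] {μ : Measure Ω}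
    {f g : Ω → ℝ} (hf : MemLp f 2 μ) (hg : MemLp g 2 μ) :
    Integrable (fun ω => f ω * g ω) μ := by
  have h1 : Integrable (fun ω => (f ω + g ω) ^ 2) μ := by
    simpa [Pi.add_apply] using (hf.add hg).integrable_sq
  have h2 := hf.integrable_sq
  have h3 := hg.integrable_sq
  refine (((h1.sub h2).sub h3).div_const 2).congr ?_
  filter_upwards with ω
  simp only [Pi.sub_apply]
  ring

lemma geom_aux {r C : ℂ} {f : ℕ → ℂ} (hstep : ∀ n, f (n + 1) = r * f n + C) (t : ℕ) :
    f t = r ^ t * f 0 + C * ∑ j ∈ range t, r ^ j := by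
  induction t with
  | zero => simp
  | succ n ih =>
    rw [hstep, ih, Finset.sum_range_succ']
    simp only [pow_succ, pow_zero, ← Finset.sum_mul]
    ring

lemma key_lemma (k s2 : ℂ) (p q : ℂ)
    (hk : k = (1 - p) * (1 - q))
    (X Y Z : ℕ → ℂ)
    (hY : ∀ n, Y (n + 1) = (p * q) ^ 2 * Y n + 2 * (p * q) * k * Z n + k ^ 2 * X n + s2)
    (hZ : ∀ n, Z (n + 1) = (p * q) * Z n + k * X n - Y (n + 1))
    (hX : ∀ n, X (n + 1) = X n - 2 * ((p * q) * Z n + k * X n) + Y (n + 1))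
    (hY0 : Y 0 = 0) (hZ0 : Z 0 = 0) (t : ℕ) :
    (p - q) ^ 2 * X t
      = (p ^ (t + 1) - q ^ (t + 1) - (p * q) * (p ^ t - q ^ t)) ^ 2 * X 0
        + s2 * ∑ j ∈ range t, (p ^ (j + 1) - q ^ (j + 1)) ^ 2 := by
  subst hk
  set A : ℂ → ℕ → ℂ := fun r n =>
    (r - p * q) ^ 2 * X n - 2 * (p * q) * (r - p * q) * Z n + (p * q) ^ 2 * Y n
    with hA
  set D : ℕ → ℂ := fun n =>
    (p - p * q) * (q - p * q) * X n - (p * q) * (p + q - 2 * (p * q)) * Z n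
      + (p * q) ^ 2 * Y n with hD
  have stepP : ∀ n, A p (n + 1) = p ^ 2 * A p n + p ^ 2 * s2 := by
    intro n
    simp only [hA]
    rw [hX n, hZ n, hY n]
    ring
  have stepQ : ∀ n, A q (n + 1) = q ^ 2 * A q n + q ^ 2 * s2 := by
    intro n
    simp only [hA]
    rw [hX n, hZ n, hY n]
    ring
  have stepD : ∀ n, D (n + 1) = (p * q) * D n + (p * q) * s2 := by
    intro n
    simp only [hD]
    rw [hX n, hZ n, hY n]
    ring
  have cfP := geom_aux (r := p ^ 2) (C := p ^ 2 * s2) stepP t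
  have cfQ := geom_aux (r := q ^ 2) (C := q ^ 2 * s2) stepQ t
  have cfD := geom_aux (r := p * q) (C := (p * q) * s2) stepD t
  have comb : (p - q) ^ 2 * X t = A p t - 2 * D t + A q t := by
    simp only [hA, hD]; ring
  have comb0 : ∀ r : ℂ, A r 0 = (r - p * q) ^ 2 * X 0 := by
    intro r; simp only [hA, hY0, hZ0]; ring
  have combD0 : D 0 = (p - p * q) * (q - p * q) * X 0 := by
    simp only [hD, hY0, hZ0]; ring
  rw [comb, cfP, cfQ, cfD, comb0, comb0, combD0]
  have hsum4 : s2 * ∑ j ∈ range t, (p ^ (j + 1) - q ^ (j + 1)) ^ 2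
      = p ^ 2 * s2 * (∑ i ∈ range t, (p ^ 2) ^ i)
        - 2 * (p * q * s2 * ∑ i ∈ range t, (p * q) ^ i)
        + q ^ 2 * s2 * ∑ i ∈ range t, (q ^ 2) ^ i := by
    simp only [Finset.mul_sum]
    rw [← Finset.sum_sub_distrib, ← Finset.sum_add_distrib]
    exact Finset.sum_congr rfl fun j _ => by ring
  have hX0 : (p ^ 2) ^ t * ((p - p * q) ^ 2 * X 0)
        - 2 * ((p * q) ^ t * ((p - p * q) * (q - p * q) * X 0))
        + (q ^ 2) ^ t * ((q - p * q) ^ 2 * X 0)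
      = (p ^ (t + 1) - q ^ (t + 1) - p * q * (p ^ t - q ^ t)) ^ 2 * X 0 := by
    have h1 : (p ^ 2) ^ t = p ^ t * p ^ t := by rw [← pow_mul, two_mul, pow_add]
    have h2 : (q ^ 2) ^ t = q ^ t * q ^ t := by rw [← pow_mul, two_mul, pow_add]
    have h3 : (p * q) ^ t = p ^ t * q ^ t := mul_pow p q t
    rw [h1, h2, h3, pow_succ, pow_succ]
    ring
  rw [hsum4]
  linear_combination hX0

lemma root_abs_lt_one (s b : ℝ) (p q : ℂ) (hb0 : 0 ≤ b) (hb1 : b < 1)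
    (hs : |s| < 1 + b) (hsum : p + q = (s : ℂ)) (hprod : p * q = (b : ℂ)) :
    ‖p‖ < 1 := by
  have hquad : p ^ 2 - (s : ℂ) * p + (b : ℂ) = 0 := by linear_combination p * hsum - hprod
  have hre := congrArg Complex.re hquad
  have him := congrArg Complex.im hquad
  simp [Complex.mul_re, Complex.mul_im, pow_two] at hre him
  -- him : p.re * p.im + p.im * p.re - s * p.im = 0 (some form)
  rcases eq_or_ne p.im 0 with hy | hy
  · -- real roots
    have hqim : q.im = 0 := by
      have := congrArg Complex.im hsum
      simp [hy] at this
      linarith [this]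
    have hsre : p.re + q.re = s := by
      have := congrArg Complex.re hsum; simpa using this
    have hpre : p.re * q.re = b := by
      have := congrArg Complex.re hprod
      simp [Complex.mul_re, hy, hqim] at this
      linarith [this]
    have habs : ‖p‖ = |p.re| := by
      rw [show p = ((p.re : ℝ) : ℂ) from Complex.ext rfl (by simp [hy])]
      exact (Complex.norm_real _).trans (Real.norm_eq_abs _)
    rw [habs, abs_lt]
    have h1 : (1 - p.re) * (1 - q.re) = 1 - s + b := by rw [← hsre, ← hpre]; ring
    have h2 : (1 + p.re) * (1 + q.re) = 1 + s + b := by rw [← hsre, ← hpre]; ring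
    have hs1 : 1 - s + b > 0 := by cases abs_lt.mp hs; linarith
    have hs2 : 1 + s + b > 0 := by cases abs_lt.mp hs; linarith
    constructor
    · by_contra hcon
      push_neg at hcon
      have hq1 : 1 + q.re < 0 := by nlinarith
      nlinarith
    · by_contra hcon
      push_neg at hcon
      have hq1 : 1 - q.re < 0 := by nlinarith
      nlinarith
  · -- complex conjugate roots
    have hs2 : s = 2 * p.re := by
      have : p.im * (2 * p.re - s) = 0 := by linarith [him]
      rcases mul_eq_zero.mp this with h | h
      · exact absurd h hy
      · linarith
    have hb : b = p.re ^ 2 + p.im ^ 2 := by linear_combination hre + p.re * hs2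
    have : ‖p‖ ^ 2 = b := by
      rw [Complex.sq_norm, Complex.normSq_apply, hb]; ring
    nlinarith [norm_nonneg p, this]

lemma roots_distinct (α h β : ℝ) (hα : 0 < α) (hh : 0 < h) (hβ1 : β < 1)
    (hβne : β ≠ (1 - Real.sqrt (α * h)) ^ 2) (p q : ℂ)
    (hsum : p + q = ((1 - α * h + β : ℝ) : ℂ)) (hprod : p * q = (β : ℂ)) : p ≠ q := by
  intro hpq
  rw [← hpq] at hsum hprod
  have him : p.im = 0 := by
    have := congrArg Complex.im hsum
    simp at this
    linarith
  have hare : 2 * p.re = 1 - α * h + β := by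
    have := congrArg Complex.re hsum
    simpa [two_mul] using this
  have hsq : p.re ^ 2 = β := by
    have := congrArg Complex.re hprod
    simp [Complex.mul_re, him] at this
    linear_combination this
  have ha1 : p.re < 1 := by nlinarith
  have hαh : α * h = (1 - p.re) ^ 2 := by linear_combination hare - hsq
  have hsqrt : Real.sqrt (α * h) = 1 - p.re := by
    rw [hαh]; exact Real.sqrt_sq (by linarith)
  apply hβne
  rw [hsqrt, ← hsq]
  ring

lemma conj_pair (s b : ℝ) (p q : ℂ) (hsum : p + q = (s : ℂ)) (hprod : p * q = (b : ℂ)) :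
    ((starRingEnd ℂ) p = p ∧ (starRingEnd ℂ) q = q)
      ∨ ((starRingEnd ℂ) p = q ∧ (starRingEnd ℂ) q = p) := by
  have hquad : p ^ 2 - (s : ℂ) * p + (b : ℂ) = 0 := by linear_combination p * hsum - hprod
  have hquadc : (starRingEnd ℂ) p ^ 2 - (s : ℂ) * (starRingEnd ℂ) p + (b : ℂ) = 0 := by
    have := congrArg (starRingEnd ℂ) hquad
    simpa [map_sub, map_add, map_mul, map_pow, Complex.conj_ofReal] using this
  have hz : ((starRingEnd ℂ) p - p) * ((starRingEnd ℂ) p - q) = 0 := by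
    linear_combination hquadc + hprod - (starRingEnd ℂ) p * hsum
  rcases mul_eq_zero.mp hz with hcase | hcase
  · left
    have hpp : (starRingEnd ℂ) p = p := by linear_combination hcase
    refine ⟨hpp, ?_⟩
    have hq : q = (s : ℂ) - p := by linear_combination hsum
    rw [hq]
    simp [map_sub, Complex.conj_ofReal, hpp]
  · right
    have hpq2 : (starRingEnd ℂ) p = q := by linear_combination hcase
    refine ⟨hpq2, ?_⟩
    have := congrArg (starRingEnd ℂ) hsum
    simp only [map_add, Complex.conj_ofReal] at this
    rw [hpq2] at this
    linear_combination this - hsum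

lemma sum_sq_le (p q : ℂ) (hp : ‖p‖ < 1) (hq : ‖q‖ < 1)
    (u : ℕ → ℝ) (hu : ∀ j, ((u j : ℝ) : ℂ) = (p ^ (j + 1) - q ^ (j + 1)) / (p - q))
    (k : ℝ)
    (hkC : ((k : ℝ) : ℂ) = (p ^ 2 * (1 - p ^ 2)⁻¹ - 2 * ((p * q) * (1 - p * q)⁻¹)
        + q ^ 2 * (1 - q ^ 2)⁻¹) / (p - q) ^ 2)
    (t : ℕ) : ∑ j ∈ Finset.range t, (u j) ^ 2 ≤ k := by
  have hnp : ‖p‖ < 1 := by exact hp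
  have hnq : ‖q‖ < 1 := by exact hq
  have hp2 : ‖p ^ 2‖ < 1 := by
    rw [norm_pow]; nlinarith [norm_nonneg p]
  have hq2 : ‖q ^ 2‖ < 1 := by
    rw [norm_pow]; nlinarith [norm_nonneg q]
  have hpq2 : ‖p * q‖ < 1 := by
    rw [norm_mul]; nlinarith [norm_nonneg p, norm_nonneg q]
  have Sp : Summable fun j : ℕ => (p ^ 2) ^ j := summable_geometric_of_norm_lt_one hp2
  have Sq : Summable fun j : ℕ => (q ^ 2) ^ j := summable_geometric_of_norm_lt_one hq2
  have Spq : Summable fun j : ℕ => (p * q) ^ j := summable_geometric_of_norm_lt_one hpq2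
  set w : ℕ → ℂ := fun j => (p ^ (j + 1) - q ^ (j + 1)) / (p - q) with hw
  have hw2 : ∀ j, (w j) ^ 2
      = (p ^ 2 * (p ^ 2) ^ j - 2 * ((p * q) * (p * q) ^ j) + q ^ 2 * (q ^ 2) ^ j)
        / (p - q) ^ 2 := by
    intro j
    rw [hw]
    rw [div_pow]
    congr 1
    ring
  have SW : Summable fun j => (w j) ^ 2 := by
    have : Summable fun j : ℕ =>
        (p ^ 2 * (p ^ 2) ^ j - 2 * ((p * q) * (p * q) ^ j) + q ^ 2 * (q ^ 2) ^ j)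
          / (p - q) ^ 2 := by
      apply Summable.div_const
      exact ((Sp.mul_left _).sub ((Spq.mul_left _).mul_left 2)).add (Sq.mul_left _)
    exact this.congr fun j => (hw2 j).symm
  have hcast : ∀ j, ((u j ^ 2 : ℝ) : ℂ) = (w j) ^ 2 := by
    intro j
    push_cast
    rw [hu j, hw]
  have SU : Summable fun j => (u j) ^ 2 := by
    rw [← Complex.summable_ofReal]
    exact SW.congr fun j => (hcast j).symm
  have htsum : ∑' j, (u j) ^ 2 = k := by
    have h1 : ((∑' j, (u j) ^ 2 : ℝ) : ℂ) = ∑' j, (w j) ^ 2 := by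
      rw [Complex.ofReal_tsum]
      exact tsum_congr hcast
    have h2 : ∑' j, (w j) ^ 2
        = (p ^ 2 * (1 - p ^ 2)⁻¹ - 2 * ((p * q) * (1 - p * q)⁻¹)
            + q ^ 2 * (1 - q ^ 2)⁻¹) / (p - q) ^ 2 := by
      rw [tsum_congr hw2, tsum_div_const]
      rw [Summable.tsum_add ((Sp.mul_left _).sub ((Spq.mul_left _).mul_left 2)) (Sq.mul_left _)]
      rw [Summable.tsum_sub (Sp.mul_left _) ((Spq.mul_left _).mul_left 2)]
      rw [tsum_mul_left, tsum_mul_left, tsum_mul_left, tsum_mul_left]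
      rw [tsum_geometric_of_norm_lt_one hp2, tsum_geometric_of_norm_lt_one hq2,
        tsum_geometric_of_norm_lt_one hpq2]
    have := h1.trans (h2.trans hkC.symm)
    exact_mod_cast this
  calc ∑ j ∈ Finset.range t, (u j) ^ 2
      ≤ ∑' j, (u j) ^ 2 := Summable.sum_le_tsum _ (fun i _ => sq_nonneg _) SU
    _ = k := htsum

set_option maxHeartbeats 2000000

/-- For momentum SGD on a scalar noisy quadratic (`m(t+1) = βm(t) + hθ(t) + √(c/B)ε(t)`,
`θ(t+1) = θ(t) - αm(t+1)`, `m(0) = 0`), with `0 ≤ β < 1`, `β ≠ (1-√(αh))²` and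
`αh < 2(1+β)`, the expected risk at time `t` satisfies
`E[ℓ(θ(t))] ≤ |(r₁^(t+1) - r₂^(t+1) - β(r₁^t - r₂^t))/(r₁-r₂)|² E[ℓ(θ(0))]
  + (1+β)αc/(2B(2β+2-αh)(1-β))`,
where `r₁, r₂` are the (possibly complex) roots of `x² - (1-αh+β)x + β = 0`. -/
theorem stmt5 {Ω : Type*} [MeasurableSpace Ω] {μ : Measure Ω} [IsProbabilityMeasure μ]
    (α h c B β : ℝ) (hα : 0 < α) (hh : 0 < h) (hc : 0 < c) (hB : 0 < B)
    (hβ0 : 0 ≤ β) (hβ1 : β < 1) (hβne : β ≠ (1 - Real.sqrt (α * h)) ^ 2)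
    (hstable : α * h < 2 * (1 + β))
    (θ m ε : ℕ → Ω → ℝ)
    (hθmeas : ∀ t, Measurable (θ t)) (hmmeas : ∀ t, Measurable (m t))
    (hεmeas : ∀ t, Measurable (ε t))
    (hθL2 : ∀ t, MemLp (θ t) 2 μ) (hmL2 : ∀ t, MemLp (m t) 2 μ)
    (hεL2 : ∀ t, MemLp (ε t) 2 μ)
    (hmean : ∀ t, ∫ ω, ε t ω ∂μ = 0) (hvar : ∀ t, variance (ε t) μ = 1)
    (hindep : ∀ t, IndepFun (fun ω => (θ t ω, m t ω)) (ε t) μ)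
    (hm0 : ∀ ω, m 0 ω = 0)
    (hrecm : ∀ t ω, m (t + 1) ω = β * m t ω + h * θ t ω + Real.sqrt (c / B) * ε t ω)
    (hrecθ : ∀ t ω, θ (t + 1) ω = θ t ω - α * m (t + 1) ω)
    (r₁ r₂ : ℂ)
    (hprod : r₁ * r₂ = (β : ℂ)) (hsum : r₁ + r₂ = ((1 - α * h + β : ℝ) : ℂ))
    (t : ℕ) :
    ∫ ω, (1 / 2) * h * (θ t ω) ^ 2 ∂μ
      ≤ ‖(r₁ ^ (t + 1) - r₂ ^ (t + 1) - (β : ℂ) * (r₁ ^ t - r₂ ^ t))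
            / (r₁ - r₂)‖ ^ 2 * ∫ ω, (1 / 2) * h * (θ 0 ω) ^ 2 ∂μ
        + (1 + β) * α * c / (2 * B * (2 * β + 2 - α * h) * (1 - β)) := by
  have hαh : 0 < α * h := mul_pos hα hh
  set σ : ℝ := Real.sqrt (c / B) with hσdef
  have hσ2 : σ ^ 2 = c / B := Real.sq_sqrt (div_pos hc hB).le
  -- cross terms vanish
  have hθε : ∀ n, ∫ ω, θ n ω * ε n ω ∂μ = 0 := by
    intro n
    have h1 : IndepFun (θ n) (ε n) μ := (hindep n).comp measurable_fst measurable_id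
    have h2 : ∫ ω, θ n ω * ε n ω ∂μ = (∫ ω, θ n ω ∂μ) * ∫ ω, ε n ω ∂μ :=
      h1.integral_mul_eq_mul_integral (hθmeas n).aestronglyMeasurable (hεmeas n).aestronglyMeasurable
    rw [h2, hmean n, mul_zero]
  have hmε : ∀ n, ∫ ω, m n ω * ε n ω ∂μ = 0 := by
    intro n
    have h1 : IndepFun (m n) (ε n) μ := (hindep n).comp measurable_snd measurable_id
    have h2 : ∫ ω, m n ω * ε n ω ∂μ = (∫ ω, m n ω ∂μ) * ∫ ω, ε n ω ∂μ :=
      h1.integral_mul_eq_mul_integral (hmmeas n).aestronglyMeasurable (hεmeas n).aestronglyMeasurable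
    rw [h2, hmean n, mul_zero]
  have hε2 : ∀ n, ∫ ω, (ε n ω) ^ 2 ∂μ = 1 := by
    intro n
    have h2 := variance_eq_sub (hεL2 n)
    rw [hvar n, hmean n] at h2
    simp only [Pi.pow_apply] at h2
    linarith
  -- second moment recursions
  have hy' : ∀ n, (∫ ω, (m (n + 1) ω) ^ 2 ∂μ)
      = β ^ 2 * (∫ ω, (m n ω) ^ 2 ∂μ) + 2 * β * h * (∫ ω, θ n ω * m n ω ∂μ)
        + h ^ 2 * (∫ ω, (θ n ω) ^ 2 ∂μ) + c / B := by
    intro n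
    have key : ∀ ω, (m (n + 1) ω) ^ 2
        = β ^ 2 * (m n ω) ^ 2 + 2 * β * h * (θ n ω * m n ω) + h ^ 2 * (θ n ω) ^ 2
          + σ ^ 2 * (ε n ω) ^ 2 + 2 * β * σ * (m n ω * ε n ω)
          + 2 * h * σ * (θ n ω * ε n ω) := by
      intro ω; rw [hrecm n ω]; ring
    have i1 : Integrable (fun ω => β ^ 2 * (m n ω) ^ 2) μ :=
      ((hmL2 n).integrable_sq).const_mul _
    have i2 : Integrable (fun ω => 2 * β * h * (θ n ω * m n ω)) μ :=
      (integrable_mul_of_memL2 (hθL2 n) (hmL2 n)).const_mul _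
    have i3 : Integrable (fun ω => h ^ 2 * (θ n ω) ^ 2) μ :=
      ((hθL2 n).integrable_sq).const_mul _
    have i4 : Integrable (fun ω => σ ^ 2 * (ε n ω) ^ 2) μ :=
      ((hεL2 n).integrable_sq).const_mul _
    have i5 : Integrable (fun ω => 2 * β * σ * (m n ω * ε n ω)) μ :=
      (integrable_mul_of_memL2 (hmL2 n) (hεL2 n)).const_mul _
    have i6 : Integrable (fun ω => 2 * h * σ * (θ n ω * ε n ω)) μ :=
      (integrable_mul_of_memL2 (hθL2 n) (hεL2 n)).const_mul _
    have i12 : Integrable (fun ω => β ^ 2 * (m n ω) ^ 2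
        + 2 * β * h * (θ n ω * m n ω)) μ := i1.add i2
    have i13 : Integrable (fun ω => β ^ 2 * (m n ω) ^ 2
        + 2 * β * h * (θ n ω * m n ω) + h ^ 2 * (θ n ω) ^ 2) μ := i12.add i3
    have i14 : Integrable (fun ω => β ^ 2 * (m n ω) ^ 2
        + 2 * β * h * (θ n ω * m n ω) + h ^ 2 * (θ n ω) ^ 2
        + σ ^ 2 * (ε n ω) ^ 2) μ := i13.add i4
    have i15 : Integrable (fun ω => β ^ 2 * (m n ω) ^ 2
        + 2 * β * h * (θ n ω * m n ω) + h ^ 2 * (θ n ω) ^ 2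
        + σ ^ 2 * (ε n ω) ^ 2 + 2 * β * σ * (m n ω * ε n ω)) μ := i14.add i5
    simp only [key]
    rw [integral_add i15 i6, integral_add i14 i5, integral_add i13 i4,
      integral_add i12 i3, integral_add i1 i2,
      integral_const_mul, integral_const_mul, integral_const_mul, integral_const_mul,
      integral_const_mul, integral_const_mul, hθε n, hmε n, hε2 n, hσ2]
    ring
  have hw : ∀ n, ∫ ω, θ n ω * m (n + 1) ω ∂μ
      = β * (∫ ω, θ n ω * m n ω ∂μ) + h * (∫ ω, (θ n ω) ^ 2 ∂μ) := by
    intro n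
    have key : ∀ ω, θ n ω * m (n + 1) ω
        = β * (θ n ω * m n ω) + h * (θ n ω) ^ 2 + σ * (θ n ω * ε n ω) := by
      intro ω; rw [hrecm n ω]; ring
    have i1 : Integrable (fun ω => β * (θ n ω * m n ω)) μ :=
      (integrable_mul_of_memL2 (hθL2 n) (hmL2 n)).const_mul _
    have i2 : Integrable (fun ω => h * (θ n ω) ^ 2) μ :=
      ((hθL2 n).integrable_sq).const_mul _
    have i3 : Integrable (fun ω => σ * (θ n ω * ε n ω)) μ :=
      (integrable_mul_of_memL2 (hθL2 n) (hεL2 n)).const_mul _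
    have i12 : Integrable (fun ω => β * (θ n ω * m n ω) + h * (θ n ω) ^ 2) μ :=
      i1.add i2
    simp only [key]
    rw [integral_add i12 i3, integral_add i1 i2,
      integral_const_mul, integral_const_mul, integral_const_mul, hθε n]
    ring
  have hz' : ∀ n, ∫ ω, θ (n + 1) ω * m (n + 1) ω ∂μ
      = (∫ ω, θ n ω * m (n + 1) ω ∂μ) - α * (∫ ω, (m (n + 1) ω) ^ 2 ∂μ) := by
    intro n
    have key : ∀ ω, θ (n + 1) ω * m (n + 1) ω
        = θ n ω * m (n + 1) ω - α * (m (n + 1) ω) ^ 2 := by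
      intro ω; rw [hrecθ n ω]; ring
    have i1 : Integrable (fun ω => θ n ω * m (n + 1) ω) μ :=
      integrable_mul_of_memL2 (hθL2 n) (hmL2 (n + 1))
    have i2 : Integrable (fun ω => α * (m (n + 1) ω) ^ 2) μ :=
      ((hmL2 (n + 1)).integrable_sq).const_mul _
    simp only [key]
    rw [integral_sub i1 i2, integral_const_mul]
  have hx' : ∀ n, ∫ ω, (θ (n + 1) ω) ^ 2 ∂μ
      = (∫ ω, (θ n ω) ^ 2 ∂μ) - 2 * α * (∫ ω, θ n ω * m (n + 1) ω ∂μ)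
        + α ^ 2 * (∫ ω, (m (n + 1) ω) ^ 2 ∂μ) := by
    intro n
    have key : ∀ ω, (θ (n + 1) ω) ^ 2
        = (θ n ω) ^ 2 - 2 * α * (θ n ω * m (n + 1) ω) + α ^ 2 * (m (n + 1) ω) ^ 2 := by
      intro ω; rw [hrecθ n ω]; ring
    have i1 : Integrable (fun ω => (θ n ω) ^ 2) μ := (hθL2 n).integrable_sq
    have i2 : Integrable (fun ω => 2 * α * (θ n ω * m (n + 1) ω)) μ :=
      (integrable_mul_of_memL2 (hθL2 n) (hmL2 (n + 1))).const_mul _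
    have i3 : Integrable (fun ω => α ^ 2 * (m (n + 1) ω) ^ 2) μ :=
      ((hmL2 (n + 1)).integrable_sq).const_mul _
    have i12 : Integrable (fun ω => (θ n ω) ^ 2
        - 2 * α * (θ n ω * m (n + 1) ω)) μ := i1.sub i2
    simp only [key]
    rw [integral_add i12 i3, integral_sub i1 i2, integral_const_mul,
      integral_const_mul]
  have hy0 : ∫ ω, (m 0 ω) ^ 2 ∂μ = 0 := by simp [hm0]
  have hz0 : ∫ ω, θ 0 ω * m 0 ω ∂μ = 0 := by simp [hm0]
  -- complexification
  set XC : ℕ → ℂ := fun n => ((∫ ω, (θ n ω) ^ 2 ∂μ : ℝ) : ℂ) with hXCdef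
  set YC : ℕ → ℂ := fun n => ((α ^ 2 * ∫ ω, (m n ω) ^ 2 ∂μ : ℝ) : ℂ) with hYCdef
  set ZC : ℕ → ℂ := fun n => ((α * ∫ ω, θ n ω * m n ω ∂μ : ℝ) : ℂ) with hZCdef
  set kC : ℂ := ((α * h : ℝ) : ℂ) with hkCdef
  set s2C : ℂ := ((α ^ 2 * (c / B) : ℝ) : ℂ) with hs2Cdef
  have hsumC : r₁ + r₂ = 1 - (α : ℂ) * (h : ℂ) + (β : ℂ) := by push_cast at hsum ⊢; exact hsum
  have hkrel : kC = (1 - r₁) * (1 - r₂) := by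
    rw [hkCdef]; push_cast; linear_combination hsumC - hprod
  have hYC : ∀ n, YC (n + 1)
      = (r₁ * r₂) ^ 2 * YC n + 2 * (r₁ * r₂) * kC * ZC n + kC ^ 2 * XC n + s2C := by
    intro n
    rw [hprod, hXCdef, hYCdef, hZCdef, hkCdef, hs2Cdef]
    beta_reduce
    have realeq : α ^ 2 * ∫ ω, (m (n + 1) ω) ^ 2 ∂μ
        = β ^ 2 * (α ^ 2 * ∫ ω, (m n ω) ^ 2 ∂μ)
          + 2 * β * (α * h) * (α * ∫ ω, θ n ω * m n ω ∂μ)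
          + (α * h) ^ 2 * (∫ ω, (θ n ω) ^ 2 ∂μ) + α ^ 2 * (c / B) := by
      rw [hy' n]; ring
    exact_mod_cast congrArg (fun r : ℝ => (r : ℂ)) realeq
  have hZC : ∀ n, ZC (n + 1) = (r₁ * r₂) * ZC n + kC * XC n - YC (n + 1) := by
    intro n
    rw [hprod, hXCdef, hYCdef, hZCdef, hkCdef]
    beta_reduce
    have realeq : α * ∫ ω, θ (n + 1) ω * m (n + 1) ω ∂μ
        = β * (α * ∫ ω, θ n ω * m n ω ∂μ) + (α * h) * (∫ ω, (θ n ω) ^ 2 ∂μ)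
          - α ^ 2 * ∫ ω, (m (n + 1) ω) ^ 2 ∂μ := by
      rw [hz' n, hw n]; ring
    exact_mod_cast congrArg (fun r : ℝ => (r : ℂ)) realeq
  have hXC : ∀ n, XC (n + 1)
      = XC n - 2 * ((r₁ * r₂) * ZC n + kC * XC n) + YC (n + 1) := by
    intro n
    rw [hprod, hXCdef, hYCdef, hZCdef, hkCdef]
    beta_reduce
    have realeq : ∫ ω, (θ (n + 1) ω) ^ 2 ∂μ
        = (∫ ω, (θ n ω) ^ 2 ∂μ)
          - 2 * (β * (α * ∫ ω, θ n ω * m n ω ∂μ) + (α * h) * (∫ ω, (θ n ω) ^ 2 ∂μ))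
          + α ^ 2 * ∫ ω, (m (n + 1) ω) ^ 2 ∂μ := by
      rw [hx' n, hw n]; ring
    exact_mod_cast congrArg (fun r : ℝ => (r : ℂ)) realeq
  have hY0 : YC 0 = 0 := by rw [hYCdef]; simp [hy0]
  have hZ0 : ZC 0 = 0 := by rw [hZCdef]; simp [hz0]
  have HK := key_lemma kC s2C r₁ r₂ hkrel XC YC ZC hYC hZC hXC hY0 hZ0 t
  -- roots facts
  have habs_s : |1 - α * h + β| < 1 + β := by
    rw [abs_lt]; constructor <;> nlinarith
  have hap : ‖r₁‖ < 1 :=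
    root_abs_lt_one (1 - α * h + β) β r₁ r₂ hβ0 hβ1 habs_s hsum hprod
  have haq : ‖r₂‖ < 1 :=
    root_abs_lt_one (1 - α * h + β) β r₂ r₁ hβ0 hβ1 habs_s
      (by rw [add_comm]; exact hsum) (by rw [mul_comm]; exact hprod)
  have hne : r₁ ≠ r₂ := roots_distinct α h β hα hh hβ1 hβne r₁ r₂ hsum hprod
  have hne' : r₁ - r₂ ≠ 0 := sub_ne_zero.mpr hne
  -- real sequence u
  have hconj := conj_pair (1 - α * h + β) β r₁ r₂ hsum hprod
  set u : ℕ → ℝ := fun j => ((r₁ ^ (j + 1) - r₂ ^ (j + 1)) / (r₁ - r₂)).re with hudef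
  have hu : ∀ j, ((u j : ℝ) : ℂ) = (r₁ ^ (j + 1) - r₂ ^ (j + 1)) / (r₁ - r₂) := by
    intro j
    apply Complex.conj_eq_iff_re.mp
    rcases hconj with ⟨h1, h2⟩ | ⟨h1, h2⟩
    · rw [map_div₀, map_sub, map_sub, map_pow, map_pow, h1, h2]
    · rw [map_div₀, map_sub, map_sub, map_pow, map_pow, h1, h2,
        ← neg_sub (r₁ ^ (j + 1)) (r₂ ^ (j + 1)), ← neg_sub r₁ r₂, neg_div_neg_eq]
  have hsumeq : (∑ j ∈ Finset.range t, (r₁ ^ (j + 1) - r₂ ^ (j + 1)) ^ 2)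
      = (r₁ - r₂) ^ 2 * ((∑ j ∈ Finset.range t, (u j) ^ 2 : ℝ) : ℂ) := by
    push_cast
    rw [Finset.mul_sum]
    refine Finset.sum_congr rfl fun j _ => ?_
    rw [hu j, div_pow]
    field_simp
  have hxt : XC t = ((r₁ ^ (t + 1) - r₂ ^ (t + 1) - (β : ℂ) * (r₁ ^ t - r₂ ^ t))
        / (r₁ - r₂)) ^ 2 * XC 0
      + ((α ^ 2 * (c / B) * (∑ j ∈ Finset.range t, (u j) ^ 2) : ℝ) : ℂ) := by
    rw [hsumeq, hprod] at HK
    apply mul_left_cancel₀ (pow_ne_zero 2 hne')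
    rw [HK, hs2Cdef]
    push_cast
    field_simp
  -- real part extraction
  have hret : (∫ ω, (θ t ω) ^ 2 ∂μ)
      = ((((r₁ ^ (t + 1) - r₂ ^ (t + 1) - (β : ℂ) * (r₁ ^ t - r₂ ^ t))
          / (r₁ - r₂)) ^ 2).re) * (∫ ω, (θ 0 ω) ^ 2 ∂μ)
        + α ^ 2 * (c / B) * (∑ j ∈ Finset.range t, (u j) ^ 2) := by
    have hre := congrArg Complex.re hxt
    rw [hXCdef] at hre
    beta_reduce at hre
    simpa only [Complex.add_re, Complex.mul_re, Complex.ofReal_re, Complex.ofReal_im,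
      mul_zero, sub_zero] using hre
  -- bounds
  have hx0 : 0 ≤ ∫ ω, (θ 0 ω) ^ 2 ∂μ := integral_nonneg fun ω => sq_nonneg _
  have hAre : ((((r₁ ^ (t + 1) - r₂ ^ (t + 1) - (β : ℂ) * (r₁ ^ t - r₂ ^ t))
        / (r₁ - r₂)) ^ 2).re)
      ≤ (‖(r₁ ^ (t + 1) - r₂ ^ (t + 1) - (β : ℂ) * (r₁ ^ t - r₂ ^ t))
          / (r₁ - r₂)‖) ^ 2 := by
    calc _ ≤ ‖((r₁ ^ (t + 1) - r₂ ^ (t + 1) - (β : ℂ) * (r₁ ^ t - r₂ ^ t))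
          / (r₁ - r₂)) ^ 2‖ := Complex.re_le_norm _
      _ = _ := by rw [norm_pow]
  -- tsum bound
  have h1p : (1 : ℂ) - r₁ ≠ 0 := by
    intro hcon
    have : r₁ = 1 := by linear_combination -hcon
    rw [this] at hap; simp at hap
  have h1q : (1 : ℂ) - r₂ ≠ 0 := by
    intro hcon
    have : r₂ = 1 := by linear_combination -hcon
    rw [this] at haq; simp at haq
  have h1p' : (1 : ℂ) + r₁ ≠ 0 := by
    intro hcon
    have : r₁ = -1 := by linear_combination hcon
    rw [this] at hap; simp at hap
  have h1q' : (1 : ℂ) + r₂ ≠ 0 := by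
    intro hcon
    have : r₂ = -1 := by linear_combination hcon
    rw [this] at haq; simp at haq
  have h1pq : (1 : ℂ) - r₁ * r₂ ≠ 0 := by
    intro hcon
    have : ‖r₁ * r₂‖ = 1 := by
      have : r₁ * r₂ = 1 := by linear_combination -hcon
      rw [this]; simp
    rw [norm_mul] at this
    nlinarith [norm_nonneg r₁, norm_nonneg r₂]
  have h1p2 : (1 : ℂ) - r₁ ^ 2 ≠ 0 := by
    intro hcon
    apply h1p
    have h2 := mul_ne_zero h1p h1p'
    have : (1 - r₁) * (1 + r₁) = 0 := by linear_combination hcon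
    exact absurd this h2
  have h1q2 : (1 : ℂ) - r₂ ^ 2 ≠ 0 := by
    intro hcon
    have h2 := mul_ne_zero h1q h1q'
    have : (1 - r₂) * (1 + r₂) = 0 := by linear_combination hcon
    exact absurd this h2
  have hβC : 0 < 1 - β := by linarith
  have h2βC : 0 < 2 + 2 * β - α * h := by nlinarith
  have hαhC : ((α : ℝ) : ℂ) * ((h : ℝ) : ℂ) = (1 - r₁) * (1 - r₂) := by
    have := hkrel; rw [hkCdef] at this; push_cast at this; exact this
  have h2C : 2 + 2 * ((β : ℝ) : ℂ) - ((α : ℝ) : ℂ) * ((h : ℝ) : ℂ)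
      = (1 + r₁) * (1 + r₂) := by
    rw [← hprod]; linear_combination -hαhC
  have hkC : (((1 + β) / ((1 - β) * (α * h) * (2 + 2 * β - α * h)) : ℝ) : ℂ)
      = (r₁ ^ 2 * (1 - r₁ ^ 2)⁻¹ - 2 * ((r₁ * r₂) * (1 - r₁ * r₂)⁻¹)
          + r₂ ^ 2 * (1 - r₂ ^ 2)⁻¹) / (r₁ - r₂) ^ 2 := by
    push_cast
    rw [h2C, hαhC, ← hprod]
    have e1 : (1 : ℂ) - r₁ ^ 2 = (1 - r₁) * (1 + r₁) := by ring
    have e2 : (1 : ℂ) - r₂ ^ 2 = (1 - r₂) * (1 + r₂) := by ring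
    rw [e1, e2]
    have hA : (1 - r₁) * (1 + r₁) ≠ 0 := mul_ne_zero h1p h1p'
    have hB2 : (1 - r₂) * (1 + r₂) ≠ 0 := mul_ne_zero h1q h1q'
    have hN : r₁ ^ 2 * ((1 - r₁) * (1 + r₁))⁻¹ - 2 * ((r₁ * r₂) * (1 - r₁ * r₂)⁻¹)
          + r₂ ^ 2 * ((1 - r₂) * (1 + r₂))⁻¹
        = (r₁ ^ 2 * ((1 - r₂) * (1 + r₂)) * (1 - r₁ * r₂)
            - 2 * ((r₁ * r₂) * ((1 - r₁) * (1 + r₁)) * ((1 - r₂) * (1 + r₂)))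
            + r₂ ^ 2 * ((1 - r₁) * (1 + r₁)) * (1 - r₁ * r₂))
          / (((1 - r₁) * (1 + r₁)) * ((1 - r₂) * (1 + r₂)) * (1 - r₁ * r₂)) := by
      field_simp
    rw [hN, div_div]
    rw [div_eq_div_iff
      (mul_ne_zero (mul_ne_zero h1pq (mul_ne_zero h1p h1q)) (mul_ne_zero h1p' h1q'))
      (mul_ne_zero (mul_ne_zero (mul_ne_zero hA hB2) h1pq) (pow_ne_zero 2 hne'))]
    ring
  have hU : ∑ j ∈ Finset.range t, (u j) ^ 2
      ≤ (1 + β) / ((1 - β) * (α * h) * (2 + 2 * β - α * h)) :=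
    sum_sq_le r₁ r₂ hap haq u hu _ hkC t
  -- assemble
  have hmain : (∫ ω, (θ t ω) ^ 2 ∂μ)
      ≤ (‖(r₁ ^ (t + 1) - r₂ ^ (t + 1) - (β : ℂ) * (r₁ ^ t - r₂ ^ t))
          / (r₁ - r₂)‖) ^ 2 * (∫ ω, (θ 0 ω) ^ 2 ∂μ)
        + α ^ 2 * (c / B) * ((1 + β) / ((1 - β) * (α * h) * (2 + 2 * β - α * h))) := by
    rw [hret]
    have hb1 := mul_le_mul_of_nonneg_right hAre hx0
    have hb2 : α ^ 2 * (c / B) * (∑ j ∈ Finset.range t, (u j) ^ 2)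
        ≤ α ^ 2 * (c / B) * ((1 + β) / ((1 - β) * (α * h) * (2 + 2 * β - α * h))) := by
      apply mul_le_mul_of_nonneg_left hU
      positivity
    linarith
  have hconst : (1 / 2 * h) * (α ^ 2 * (c / B)
        * ((1 + β) / ((1 - β) * (α * h) * (2 + 2 * β - α * h))))
      = (1 + β) * α * c / (2 * B * (2 * β + 2 - α * h) * (1 - β)) := by
    have e : 2 * β + 2 - α * h = 2 + 2 * β - α * h := by ring
    rw [e]
    field_simp
  simp only [integral_const_mul]
  calc 1 / 2 * h * ∫ ω, (θ t ω) ^ 2 ∂μ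
      ≤ 1 / 2 * h * ((‖(r₁ ^ (t + 1) - r₂ ^ (t + 1)
            - (β : ℂ) * (r₁ ^ t - r₂ ^ t)) / (r₁ - r₂)‖) ^ 2 * (∫ ω, (θ 0 ω) ^ 2 ∂μ)
          + α ^ 2 * (c / B) * ((1 + β) / ((1 - β) * (α * h) * (2 + 2 * β - α * h)))) := by
        apply mul_le_mul_of_nonneg_left hmain
        positivity
    _ = (‖(r₁ ^ (t + 1) - r₂ ^ (t + 1) - (β : ℂ) * (r₁ ^ t - r₂ ^ t))
          / (r₁ - r₂)‖) ^ 2 * (1 / 2 * h * ∫ ω, (θ 0 ω) ^ 2 ∂μ)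
        + (1 / 2 * h) * (α ^ 2 * (c / B)
          * ((1 + β) / ((1 - β) * (α * h) * (2 + 2 * β - α * h)))) := by ring
    _ = _ := by rw [hconst]
end

section
/- If r₁ and r₂ are the roots of x² - (1-αh+β)x + β = 0 with r₁r₂ = β, r₁+r₂ = 1-αh+β, |r₁| < 1, |r₂| < 1, then ∑_{p=0}^∞ (r₁^p - r₂^p)²/(r₁-r₂)² = (1+β) / ((1-β)(2β+2-αh)(αh)) (for r₁ ≠ r₂). -/
/-- If `r₁ ≠ r₂` are the (possibly complex) roots of `x² - (1-αh+β)x + β = 0`, both of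
modulus `< 1`, then `∑_{p=0}^∞ ((r₁^p - r₂^p)/(r₁-r₂))² = (1+β)/((1-β)(2β+2-αh)(αh))`. -/
theorem stmt6 (α h β : ℝ) (hα : 0 < α) (hh : 0 < h) (hβ0 : 0 ≤ β) (hβ1 : β < 1)
    (hstable : 0 < α * h ∧ α * h < 2 * (1 + β))
    (r₁ r₂ : ℂ) (hne : r₁ ≠ r₂)
    (hprod : r₁ * r₂ = (β : ℂ)) (hsum : r₁ + r₂ = ((1 - α * h + β : ℝ) : ℂ))
    (hr₁ : ‖r₁‖ < 1) (hr₂ : ‖r₂‖ < 1) :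
    ∑' p : ℕ, ((r₁ ^ p - r₂ ^ p) / (r₁ - r₂)) ^ 2
      = (((1 + β) / ((1 - β) * (2 * β + 2 - α * h) * (α * h)) : ℝ) : ℂ) := by
  have hd : r₁ - r₂ ≠ 0 := sub_ne_zero.mpr hne
  have hn1 : ‖r₁ ^ 2‖ < 1 := by
    simpa [norm_pow] using pow_lt_one₀ (by positivity) hr₁ two_ne_zero
  have hn2 : ‖r₂ ^ 2‖ < 1 := by
    simpa [norm_pow] using pow_lt_one₀ (by positivity) hr₂ two_ne_zero
  have hn3 : ‖r₁ * r₂‖ < 1 := by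
    rw [norm_mul]
    calc ‖r₁‖ * ‖r₂‖ ≤ ‖r₁‖ * 1 := by
          exact mul_le_mul_of_nonneg_left hr₂.le (norm_nonneg _)
      _ < 1 := by simpa using hr₁
  have hz1 : (1 : ℂ) - r₁ ^ 2 ≠ 0 := by
    intro hc
    have : r₁ ^ 2 = 1 := by linear_combination -hc
    rw [this] at hn1; simp at hn1
  have hz2 : (1 : ℂ) - r₂ ^ 2 ≠ 0 := by
    intro hc
    have : r₂ ^ 2 = 1 := by linear_combination -hc
    rw [this] at hn2; simp at hn2
  have hz3 : (1 : ℂ) - r₁ * r₂ ≠ 0 := by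
    intro hc
    have : r₁ * r₂ = 1 := by linear_combination -hc
    rw [this] at hn3; simp at hn3
  have h1 := hasSum_geometric_of_norm_lt_one hn1
  have h2 := hasSum_geometric_of_norm_lt_one hn2
  have h3 := hasSum_geometric_of_norm_lt_one hn3
  have H := (((h1.add h2).sub (h3.mul_left 2)).mul_right ((r₁ - r₂) ^ 2)⁻¹)
  have H' : HasSum (fun p : ℕ => ((r₁ ^ p - r₂ ^ p) / (r₁ - r₂)) ^ 2)
      (((1 - r₁ ^ 2)⁻¹ + (1 - r₂ ^ 2)⁻¹ - 2 * (1 - r₁ * r₂)⁻¹) * ((r₁ - r₂) ^ 2)⁻¹) := by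
    refine H.congr_fun ?_
    intro p
    field_simp
    ring
  rw [H'.tsum_eq]
  -- key algebraic identity
  have e1 : (1 - r₁ ^ 2) * (1 - r₂ ^ 2)
      = ((α * h : ℝ) : ℂ) * (2 + 2 * (β : ℂ) - ((α * h : ℝ) : ℂ)) := by
    push_cast
    push_cast at hsum
    linear_combination (-(r₁ + r₂) - ((1 : ℂ) - ↑α * ↑h + ↑β)) * hsum
      + (2 + r₁ * r₂ + (β : ℂ)) * hprod
  have key : ((1 - r₁ ^ 2)⁻¹ + (1 - r₂ ^ 2)⁻¹ - 2 * (1 - r₁ * r₂)⁻¹) * ((r₁ - r₂) ^ 2)⁻¹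
      = (1 + r₁ * r₂) / ((1 - r₁ ^ 2) * (1 - r₂ ^ 2) * (1 - r₁ * r₂)) := by
    field_simp
    ring
  rw [key, hprod, e1]
  have hA : ((α * h : ℝ) : ℂ) ≠ 0 := by
    exact_mod_cast Complex.ofReal_ne_zero.mpr (by positivity)
  have hB : ((1 - β : ℝ) : ℂ) ≠ 0 := by
    exact_mod_cast Complex.ofReal_ne_zero.mpr (by intro hc; linarith)
  have hC : ((2 * β + 2 - α * h : ℝ) : ℂ) ≠ 0 := by
    exact_mod_cast Complex.ofReal_ne_zero.mpr (by intro hc; nlinarith [hstable.2])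
  rw [Complex.ofReal_div]
  have hC' : (2 + 2 * (β:ℂ) - (↑α * ↑h) : ℂ) ≠ 0 := by
    push_cast at hC
    intro hc; apply hC; linear_combination hc
  push_cast at hA hB hC ⊢
  rw [div_eq_div_iff (by exact mul_ne_zero (mul_ne_zero hA hC') hB)
    (by exact mul_ne_zero (mul_ne_zero hB hC) hA)]
  ring
end

section
/- When β = (1-√(αh))², all three eigenvalues of the momentum-SGD transition matrix T equal β. -/
lemma stmt11_aux (s lam : ℝ) :
    (Matrix.det
      (!![(1 - s ^ 2) ^ 2, ((1 - s) ^ 2) ^ 2, 2 * (1 - s ^ 2) * (1 - s) ^ 2;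
          (s ^ 2) ^ 2, ((1 - s) ^ 2) ^ 2, -2 * (1 - s) ^ 2 * s ^ 2;
          -(1 - s ^ 2) * s ^ 2, ((1 - s) ^ 2) ^ 2, (1 - 2 * s ^ 2) * (1 - s) ^ 2]
        - lam • (1 : Matrix (Fin 3) (Fin 3) ℝ)))
    = -(lam - (1 - s) ^ 2) ^ 3 := by
  simp [Matrix.det_fin_three, Matrix.one_apply, Matrix.vecHead, Matrix.vecTail]
  ring

/-- When `β = (1-√(αh))²` (with `0 < αh < 1`), all three eigenvalues of the momentum-SGD
transition matrix `T` equal `β`: its characteristic polynomial is `-(λ-β)³`. -/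
theorem stmt11 (α h : ℝ) (h0 : 0 < α * h) (h1 : α * h < 1)
    (β : ℝ) (hβ : β = (1 - Real.sqrt (α * h)) ^ 2) :
    ∀ lam : ℝ,
      (Matrix.det
        (!![(1 - α * h) ^ 2, β ^ 2, 2 * (1 - α * h) * β;
            (α * h) ^ 2, β ^ 2, -2 * β * (α * h);
            -(1 - α * h) * (α * h), β ^ 2, (1 - 2 * α * h) * β]
          - lam • (1 : Matrix (Fin 3) (Fin 3) ℝ)))
      = -(lam - β) ^ 3 := by
  intro lam
  have key := stmt11_aux (Real.sqrt (α * h)) lam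
  rw [Real.sq_sqrt h0.le] at key
  rw [show (2 : ℝ) * (α * h) = 2 * α * h from (mul_assoc 2 α h).symm] at key
  rw [hβ]
  exact key
end

section
/- For r₁ = 1-αh and r₂ = γ with 0 < αh < 2 and 0 ≤ γ < 1, the sum ∑_{p=0}^∞ ((r₁^p - r₂^p)/(r₁-r₂))² · α²c/B equals αc(1+(1-αh)γ) / (Bh(2-αh)(1-γ²)(1-(1-αh)γ)) (assuming r₁ ≠ r₂ and |r₁| < 1). -/
set_option maxHeartbeats 1000000

private lemma aux14 (x y α c B : ℝ) (hd : x - y ≠ 0)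
    (e1 : 1 - x ^ 2 ≠ 0) (e2 : 1 - y ^ 2 ≠ 0) (e3 : 1 - x * y ≠ 0) (hB : B ≠ 0) :
    (1 - x ^ 2)⁻¹ * (α ^ 2 * c / B / (x - y) ^ 2)
      + (1 - y ^ 2)⁻¹ * (α ^ 2 * c / B / (x - y) ^ 2)
      + (1 - x * y)⁻¹ * (-2 * (α ^ 2 * c / B / (x - y) ^ 2))
    = α ^ 2 * c * (1 + x * y) / (B * (1 - x ^ 2) * (1 - y ^ 2) * (1 - x * y)) := by
  field_simp
  ring

/-- For `r₁ = 1-αh` and `r₂ = γ` with `0 < αh < 2`, `0 ≤ γ < 1`, `γ ≠ 1-αh` and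
`|1-αh| < 1`, the sum `∑_{p=0}^∞ ((r₁^p - r₂^p)/(r₁-r₂))² · α²c/B` equals
`αc(1+(1-αh)γ)/(Bh(2-αh)(1-γ²)(1-(1-αh)γ))`. -/
theorem stmt14 (α h c B γ : ℝ) (hα : 0 < α) (hh : 0 < h) (hc : 0 < c) (hB : 0 < B)
    (h0 : 0 < α * h) (h2 : α * h < 2) (hγ0 : 0 ≤ γ) (hγ1 : γ < 1)
    (hne : γ ≠ 1 - α * h) (habs : |1 - α * h| < 1) :
    ∑' p : ℕ, (((1 - α * h) ^ p - γ ^ p) / ((1 - α * h) - γ)) ^ 2 * (α ^ 2 * c / B)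
      = α * c * (1 + (1 - α * h) * γ)
        / (B * h * (2 - α * h) * (1 - γ ^ 2) * (1 - (1 - α * h) * γ)) := by
  have hd : (1 - α * h) - γ ≠ 0 := sub_ne_zero.mpr (fun e => hne e.symm)
  have habsγ : |γ| < 1 := abs_lt.mpr ⟨by linarith, hγ1⟩
  have h1 : |(1 - α * h) ^ 2| < 1 := by
    rw [abs_pow]; exact pow_lt_one₀ (abs_nonneg _) habs (by norm_num)
  have hγ2 : |γ ^ 2| < 1 := by
    rw [abs_pow]; exact pow_lt_one₀ (abs_nonneg _) habsγ (by norm_num)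
  have h12 : |(1 - α * h) * γ| < 1 := by
    rw [abs_mul]
    calc |1 - α * h| * |γ| ≤ |1 - α * h| * 1 :=
          mul_le_mul_of_nonneg_left (le_of_lt habsγ) (abs_nonneg _)
      _ < 1 := by simpa using habs
  have key : ∀ p : ℕ, (((1 - α * h) ^ p - γ ^ p) / ((1 - α * h) - γ)) ^ 2 * (α ^ 2 * c / B)
      = ((1 - α * h) ^ 2) ^ p * (α ^ 2 * c / B / ((1 - α * h) - γ) ^ 2)
        + (γ ^ 2) ^ p * (α ^ 2 * c / B / ((1 - α * h) - γ) ^ 2)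
        + ((1 - α * h) * γ) ^ p * (-2 * (α ^ 2 * c / B / ((1 - α * h) - γ) ^ 2)) := by
    intro p
    rw [← pow_mul, ← pow_mul, mul_comm 2 p, pow_mul, pow_mul, mul_pow]
    field_simp
    ring
  rw [tsum_congr key]
  have s1 := (summable_geometric_of_abs_lt_one h1).mul_right
    (α ^ 2 * c / B / ((1 - α * h) - γ) ^ 2)
  have s2 := (summable_geometric_of_abs_lt_one hγ2).mul_right
    (α ^ 2 * c / B / ((1 - α * h) - γ) ^ 2)
  have s3 := (summable_geometric_of_abs_lt_one h12).mul_right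
    (-2 * (α ^ 2 * c / B / ((1 - α * h) - γ) ^ 2))
  rw [Summable.tsum_add (s1.add s2) s3, Summable.tsum_add s1 s2, tsum_mul_right, tsum_mul_right,
    tsum_mul_right, tsum_geometric_of_abs_lt_one h1, tsum_geometric_of_abs_lt_one hγ2,
    tsum_geometric_of_abs_lt_one h12]
  have e1 : (1 : ℝ) - (1 - α * h) ^ 2 ≠ 0 := by nlinarith [abs_lt.mp habs]
  have e2 : (1 : ℝ) - γ ^ 2 ≠ 0 := by nlinarith
  have e3 : (1 : ℝ) - (1 - α * h) * γ ≠ 0 := by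
    have := abs_lt.mp h12; linarith [this.2]
  rw [aux14 _ _ _ _ _ hd e1 e2 e3 (ne_of_gt hB)]
  have hq : (1 : ℝ) - (1 - α * h) ^ 2 = α * h * (2 - α * h) := by ring
  rw [hq]
  have h2' : (2 : ℝ) - α * h ≠ 0 := by linarith
  field_simp
end

section
/- In the overdamped regime β < (1-√(αh))² with 0 < αh < 1, the larger root r₁ = (1-αh+β+√((1-β)² - 2(1+β)αh + α²h²))/2 of x² - (1-αh+β)x + β is real and satisfies r₁ ≥ 1 - αh/(1-β) - O(α²h²); more precisely, |r₁ - (1 - αh/(1-β))| ≤ C · (αh)²/(1-β)³ for some absolute constant C, when αh is sufficiently small relative to (1-β)². -/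
set_option maxHeartbeats 1000000 in
/-- In the overdamped regime `β < (1-√(αh))²` with `0 < αh < 1`, the larger root
`r₁ = (1-αh+β+√((1-β)² - 2(1+β)αh + (αh)²))/2` of `x² - (1-αh+β)x + β` is a real root of
the quadratic and satisfies `|r₁ - (1 - αh/(1-β))| ≤ C·(αh)²/(1-β)³` for some absolute
constant `C`, whenever `αh` is sufficiently small relative to `(1-β)²`. -/
theorem stmt15 :
    ∃ C : ℝ, 0 < C ∧ ∃ δ : ℝ, 0 < δ ∧
      ∀ α h β : ℝ, 0 < α → 0 < h → 0 ≤ β → α * h < 1 →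
        β < (1 - Real.sqrt (α * h)) ^ 2 →
        α * h ≤ δ * (1 - β) ^ 2 →
        ∀ r₁ : ℝ,
          r₁ = (1 - α * h + β
            + Real.sqrt ((1 - β) ^ 2 - 2 * (1 + β) * (α * h) + (α * h) ^ 2)) / 2 →
          r₁ ^ 2 - (1 - α * h + β) * r₁ + β = 0 ∧
          |r₁ - (1 - α * h / (1 - β))| ≤ C * (α * h) ^ 2 / (1 - β) ^ 3 := by
  refine ⟨4, by norm_num, 1/4, by norm_num, ?_⟩
  intro α h β hα hh hβ ht1 hover hsmall r₁ hr₁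
  set t : ℝ := α * h with htdef
  have ht : 0 < t := mul_pos hα hh
  -- s = 1 - β is positive
  have hst : Real.sqrt t < 1 := by
    rw [show (1:ℝ) = Real.sqrt 1 by simp]
    exact Real.sqrt_lt_sqrt ht.le ht1
  have hst0 : 0 < Real.sqrt t := Real.sqrt_pos.mpr ht
  have hβ1 : β < 1 := lt_of_lt_of_le hover (by nlinarith)
  set s : ℝ := 1 - β with hsdef
  have hs : 0 < s := by simp [hsdef]; linarith
  have hs1 : s ≤ 1 := by simp [hsdef]; linarith
  have htb : t ≤ s ^ 2 / 4 := by
    have : t ≤ 1/4 * s ^ 2 := hsmall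
    linarith
  set D : ℝ := (1 - β) ^ 2 - 2 * (1 + β) * t + t ^ 2 with hDdef
  set A : ℝ := s + t - 2 * t / s with hAdef
  have hA : s / 2 ≤ A := by
    have h2ts : 2 * t / s ≤ s / 2 := by
      rw [div_le_div_iff₀ hs (by norm_num : (0:ℝ) < 2)]
      nlinarith
    rw [hAdef]
    linarith
  have hA2 : A = (s^2 + t*s - 2*t)/s := by rw [hAdef]; field_simp
  have hDA : D = A ^ 2 - 4 * (1 - s) * t ^ 2 / s ^ 2 := by
    rw [hDdef, hA2, hsdef]
    have hne : (1:ℝ) - β ≠ 0 := by linarith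
    field_simp
    ring
  have hβs : (1 : ℝ) - s = β := by rw [hsdef]; ring
  have hD : 0 ≤ D := by
    rw [hDA]
    have h1 : 4 * (1 - s) * t ^ 2 / s ^ 2 ≤ 4 * t ^ 2 / s ^ 2 := by
      apply div_le_div_of_nonneg_right _ (by positivity)
      nlinarith
    have h2 : 4 * t ^ 2 / s ^ 2 ≤ s ^ 2 / 4 := by
      rw [div_le_div_iff₀ (by positivity) (by norm_num)]
      nlinarith [mul_self_le_mul_self (by linarith : (0:ℝ) ≤ 4 * t) (by nlinarith : 4 * t ≤ s ^ 2)]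
    nlinarith
  set u : ℝ := Real.sqrt D with hudef
  have hu0 : 0 ≤ u := Real.sqrt_nonneg _
  have hu2 : u ^ 2 = D := Real.sq_sqrt hD
  constructor
  · rw [hr₁]
    have h := hu2
    rw [hDdef] at h
    linear_combination h / 4
  · -- |r₁ - (1 - t/s)| = |u - A| / 2 ≤ 4 t²/s³
    have hr : r₁ - (1 - t / s) = (u - A) / 2 := by
      rw [hr₁, hAdef, hsdef]
      have hne : (1:ℝ) - β ≠ 0 := by linarith
      field_simp
      ring
    have hkey : (u - A) * (u + A) = - (4 * (1 - s) * t ^ 2 / s ^ 2) := by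
      have hq : u ^ 2 - A ^ 2 = - (4 * (1 - s) * t ^ 2 / s ^ 2) := by
        rw [hu2, hDA]; ring
      nlinarith [hq]
    clear_value t s D A u
    have huA : s / 2 ≤ u + A := by linarith
    have hAu0 : 0 < u + A := by linarith
    have hDleA : u ≤ A := by
      nlinarith [hkey, div_nonneg (by nlinarith : (0:ℝ) ≤ 4 * (1 - s) * t ^ 2)
        (sq_nonneg s), mul_pos (lt_of_lt_of_le (by positivity) huA) (by positivity : (0:ℝ) < 1)]
    have hnum : (A - u) * (A + u) ≤ 4 * t ^ 2 / s ^ 2 := by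
      have h6 : (A - u) * (A + u) = 4 * (1 - s) * t ^ 2 / s ^ 2 := by nlinarith [hkey]
      rw [h6]
      apply div_le_div_of_nonneg_right _ (by positivity)
      nlinarith
    have hlow : A - u ≤ 8 * t ^ 2 / s ^ 3 := by
      have h4 : (A - u) * (s / 2) ≤ (A - u) * (A + u) :=
        mul_le_mul_of_nonneg_left (by linarith) (by linarith)
      have h5 : (A - u) * (s / 2) ≤ 4 * t ^ 2 / s ^ 2 := le_trans h4 hnum
      have h7 : A - u ≤ (4 * t ^ 2 / s ^ 2) / (s / 2) :=
        (le_div_iff₀ (by positivity)).mpr h5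
      have heq : (4 * t ^ 2 / s ^ 2) / (s / 2) = 8 * t ^ 2 / s ^ 3 := by
        field_simp; ring
      linarith [h7, heq ▸ h7]
    rw [hr, abs_div, abs_of_nonneg (by norm_num : (0:ℝ) ≤ (2:ℝ)),
      div_le_iff₀ (by norm_num : (0:ℝ) < 2), abs_le]
    have h8 : (0:ℝ) ≤ 8 * t ^ 2 / s ^ 3 := by positivity
    have h9 : 4 * t ^ 2 / s ^ 3 * 2 = 8 * t ^ 2 / s ^ 3 := by ring
    constructor <;> linarith [hlow, hDleA, h8, h9]
end

section
/- For preconditioned SGD with preconditioner P = H^p (0 ≤ p ≤ 1) on a d-dimensional noisy quadratic with diagonal Hessian H = diag(h₁,...,h_d) and codiagonal noise covariance C = diag(c₁,...,c_d), the expected total risk satisfies E[L(θ(t))] ≤ ∑ᵢ (1 - αhᵢ^{1-p})^{2t} E[ℓ(θᵢ(0))] + ∑ᵢ αcᵢhᵢ^{-p} / (2B(2 - αhᵢ^{1-p})), provided αhᵢ^{1-p} < 2 for all i. -/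
open MeasureTheory ProbabilityTheory

/-- One-dimensional linear recursion with independent noise: second-moment bound. -/
lemma sgd_coord {Ω : Type*} [MeasurableSpace Ω] {μ : Measure Ω} [IsProbabilityMeasure μ]
    (r s cc : ℝ) (hcc : 0 ≤ cc) (hr : r ^ 2 < 1)
    (X E : ℕ → Ω → ℝ) (hX : ∀ t, MemLp (X t) 2 μ) (hE : ∀ t, MemLp (E t) 2 μ)
    (hmean : ∀ t, ∫ ω, E t ω ∂μ = 0) (hvar : ∀ t, ∫ ω, (E t ω) ^ 2 ∂μ = cc)
    (hindep : ∀ t, IndepFun (X t) (E t) μ)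
    (hrec : ∀ t ω, X (t + 1) ω = r * X t ω - s * E t ω) (t : ℕ) :
    ∫ ω, (X t ω) ^ 2 ∂μ
      ≤ (r ^ 2) ^ t * ∫ ω, (X 0 ω) ^ 2 ∂μ + s ^ 2 * cc / (1 - r ^ 2) := by
  have hden : (0:ℝ) < 1 - r ^ 2 := by linarith
  have hM : 0 ≤ s ^ 2 * cc / (1 - r ^ 2) :=
    div_nonneg (mul_nonneg (sq_nonneg s) hcc) hden.le
  have step : ∀ n, ∫ ω, (X (n + 1) ω) ^ 2 ∂μ
      = r ^ 2 * ∫ ω, (X n ω) ^ 2 ∂μ + s ^ 2 * cc := by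
    intro n
    have IX : Integrable (fun ω => (X n ω) ^ 2) μ := (hX n).integrable_sq
    have IE : Integrable (fun ω => (E n ω) ^ 2) μ := (hE n).integrable_sq
    have IXE : Integrable (fun ω => X n ω * E n ω) μ := by
      have := (hindep n).integrable_mul ((hX n).integrable one_le_two)
        ((hE n).integrable one_le_two)
      simpa [Pi.mul_def] using this
    have hXE : ∫ ω, X n ω * E n ω ∂μ = 0 := by
      have := (hindep n).integral_mul_eq_mul_integral (hX n).aestronglyMeasurable (hE n).aestronglyMeasurable
      simpa [Pi.mul_def, hmean n] using this
    have e1 : ∫ ω, (X (n + 1) ω) ^ 2 ∂μ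
        = ∫ ω, (r ^ 2 * (X n ω) ^ 2 - 2 * r * s * (X n ω * E n ω))
            + s ^ 2 * (E n ω) ^ 2 ∂μ := by
      refine integral_congr_ae (Filter.Eventually.of_forall fun ω => ?_)
      simp only [hrec n ω]; ring
    have I1 : Integrable (fun ω => r ^ 2 * (X n ω) ^ 2 - 2 * r * s * (X n ω * E n ω)) μ :=
      (IX.const_mul _).sub (IXE.const_mul _)
    rw [e1, integral_add I1 (IE.const_mul _),
      integral_sub (IX.const_mul _) (IXE.const_mul _), integral_const_mul,
      integral_const_mul, integral_const_mul, hXE, hvar n]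
    ring
  induction t with
  | zero => simp only [pow_zero, one_mul]; linarith
  | succ n ih =>
    have h2 : r ^ 2 * ∫ ω, (X n ω) ^ 2 ∂μ
        ≤ r ^ 2 * ((r ^ 2) ^ n * (∫ ω, (X 0 ω) ^ 2 ∂μ) + s ^ 2 * cc / (1 - r ^ 2)) :=
      mul_le_mul_of_nonneg_left ih (sq_nonneg r)
    have hMe : r ^ 2 * (s ^ 2 * cc / (1 - r ^ 2)) + s ^ 2 * cc
        = s ^ 2 * cc / (1 - r ^ 2) := by
      field_simp
      ring
    calc ∫ ω, (X (n + 1) ω) ^ 2 ∂μ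
        = r ^ 2 * ∫ ω, (X n ω) ^ 2 ∂μ + s ^ 2 * cc := step n
      _ ≤ r ^ 2 * ((r ^ 2) ^ n * (∫ ω, (X 0 ω) ^ 2 ∂μ) + s ^ 2 * cc / (1 - r ^ 2))
            + s ^ 2 * cc := by linarith
      _ = (r ^ 2) ^ (n + 1) * (∫ ω, (X 0 ω) ^ 2 ∂μ)
            + (r ^ 2 * (s ^ 2 * cc / (1 - r ^ 2)) + s ^ 2 * cc) := by ring
      _ = _ := by rw [hMe]

/-- For preconditioned SGD with preconditioner `P = H^p` (`0 ≤ p ≤ 1`) on a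
`d`-dimensional noisy quadratic with diagonal Hessian `H = diag(h₁,...,h_d)` and
codiagonal noise covariance `C = diag(c₁,...,c_d)`, provided `αhᵢ^(1-p) < 2` for all `i`,
the expected total risk satisfies
`E[L(θ(t))] ≤ ∑ᵢ (1 - αhᵢ^(1-p))^(2t) E[ℓ(θᵢ(0))] + ∑ᵢ αcᵢhᵢ^(-p)/(2B(2 - αhᵢ^(1-p)))`. -/
theorem stmt16 {Ω : Type*} [MeasurableSpace Ω] {μ : Measure Ω} [IsProbabilityMeasure μ]
    (d : ℕ) (α B p : ℝ) (hα : 0 < α) (hB : 0 < B) (hp0 : 0 ≤ p) (hp1 : p ≤ 1)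
    (h c : Fin d → ℝ) (hh : ∀ i, 0 < h i) (hc : ∀ i, 0 ≤ c i)
    (hstable : ∀ i, α * (h i) ^ (1 - p) < 2)
    (θ ε : ℕ → Ω → Fin d → ℝ)
    (hθmeas : ∀ t i, Measurable (fun ω => θ t ω i))
    (hεmeas : ∀ t i, Measurable (fun ω => ε t ω i))
    (hθL2 : ∀ t i, MemLp (fun ω => θ t ω i) 2 μ)
    (hεL2 : ∀ t i, MemLp (fun ω => ε t ω i) 2 μ)
    (hmean : ∀ t i, ∫ ω, ε t ω i ∂μ = 0)
    (hvar : ∀ t i, ∫ ω, (ε t ω i) ^ 2 ∂μ = c i)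
    (hindep : ∀ t i, IndepFun (fun ω => θ t ω i) (fun ω => ε t ω i) μ)
    (hrec : ∀ t ω i, θ (t + 1) ω i
      = θ t ω i - α * (h i) ^ (-p) * (h i * θ t ω i + ε t ω i / Real.sqrt B))
    (t : ℕ) :
    ∫ ω, ∑ i, (1 / 2) * h i * (θ t ω i) ^ 2 ∂μ
      ≤ (∑ i, (1 - α * (h i) ^ (1 - p)) ^ (2 * t)
            * ∫ ω, (1 / 2) * h i * (θ 0 ω i) ^ 2 ∂μ)
        + ∑ i, α * c i * (h i) ^ (-p) / (2 * B * (2 - α * (h i) ^ (1 - p))) := by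
  have hint : ∀ (n : ℕ) i, Integrable (fun ω => (1 / 2 : ℝ) * h i * (θ n ω i) ^ 2) μ :=
    fun n i => ((hθL2 n i).integrable_sq).const_mul _
  rw [integral_finset_sum _ (fun i _ => hint t i), ← Finset.sum_add_distrib]
  refine Finset.sum_le_sum fun i _ => ?_
  set g : ℝ := (h i) ^ (1 - p) with hgdef
  have hgpos : 0 < g := Real.rpow_pos_of_pos (hh i) _
  have hag : 0 < α * g := mul_pos hα hgpos
  have hag2 : α * g < 2 := hstable i
  have hr2 : (1 - α * g) ^ 2 < 1 := by nlinarith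
  have hhne : h i ≠ 0 := (hh i).ne'
  have hq : (h i) ^ (-p) = g / h i := by
    rw [eq_div_iff hhne, hgdef, show (1 - p) = -p + 1 by ring,
      Real.rpow_add (hh i), Real.rpow_one]
  have hsB : Real.sqrt B ≠ 0 := (Real.sqrt_pos.2 hB).ne'
  have hrec' : ∀ n ω, θ (n + 1) ω i
      = (1 - α * g) * θ n ω i - (α * (g / h i) / Real.sqrt B) * ε n ω i := by
    intro n ω
    rw [hrec n ω i, hq]
    field_simp
    ring
  have key := sgd_coord (μ := μ) (1 - α * g) (α * (g / h i) / Real.sqrt B) (c i)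
    (hc i) hr2 (fun n ω => θ n ω i) (fun n ω => ε n ω i)
    (fun n => hθL2 n i) (fun n => hεL2 n i) (fun n => hmean n i) (fun n => hvar n i)
    (fun n => hindep n i) hrec' t
  have hIc : ∀ n : ℕ, ∫ ω, (1 / 2 : ℝ) * h i * (θ n ω i) ^ 2 ∂μ
      = (1 / 2) * h i * ∫ ω, (θ n ω i) ^ 2 ∂μ := by
    intro n
    simp_rw [mul_assoc, integral_const_mul]
  rw [hIc t, hIc 0, hq, pow_mul]
  have h2ag : (0:ℝ) < 2 - α * g := by linarith
  have hden : (0:ℝ) < 1 - (1 - α * g) ^ 2 := by linarith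
  have hS : (1 / 2 : ℝ) * h i
        * ((α * (g / h i) / Real.sqrt B) ^ 2 * c i / (1 - (1 - α * g) ^ 2))
      = α * c i * (g / h i) / (2 * B * (2 - α * g)) := by
    rw [div_pow, Real.sq_sqrt hB.le,
      show (1:ℝ) - (1 - α * g) ^ 2 = (α * g) * (2 - α * g) by ring]
    field_simp
  have hmul : (1 / 2 : ℝ) * h i * ∫ ω, (θ t ω i) ^ 2 ∂μ
      ≤ (1 / 2) * h i * (((1 - α * g) ^ 2) ^ t * (∫ ω, (θ 0 ω i) ^ 2 ∂μ)
          + (α * (g / h i) / Real.sqrt B) ^ 2 * c i / (1 - (1 - α * g) ^ 2)) :=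
    mul_le_mul_of_nonneg_left key (by linarith [(hh i).le])
  calc (1 / 2 : ℝ) * h i * ∫ ω, (θ t ω i) ^ 2 ∂μ
      ≤ (1 / 2) * h i * (((1 - α * g) ^ 2) ^ t * (∫ ω, (θ 0 ω i) ^ 2 ∂μ)
          + (α * (g / h i) / Real.sqrt B) ^ 2 * c i / (1 - (1 - α * g) ^ 2)) := hmul
    _ = ((1 - α * g) ^ 2) ^ t * ((1 / 2) * h i * ∫ ω, (θ 0 ω i) ^ 2 ∂μ)
        + (1 / 2) * h i
          * ((α * (g / h i) / Real.sqrt B) ^ 2 * c i / (1 - (1 - α * g) ^ 2)) := by ring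
    _ = _ := by rw [hS]
end
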